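/- For s ∈ ℝ^d, there exists τ ∈ ℝ such that ∑_{i=1}^d ([s_i/2 − τ]_+)^2 = 1, i.e., the 1.5-entmax transformation is well defined. -/
import Mathlib


/-- Existence of the 1.5-entmax threshold: for `s : Fin d → ℝ` with `d ≥ 1`,
there exists `τ` with `∑ i, (max (s i / 2 - τ) 0)^2 = 1`. -/
theorem entmax_threshold_exists (d : ℕ) (hd : 0 < d) (s : Fin d → ℝ) :
    ∃ τ : ℝ, ∑ i, (max (s i / 2 - τ) 0) ^ 2 = 1 := by
  have hne : (Finset.univ : Finset (Fin d)).Nonempty := by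
    simpa [Finset.univ_nonempty_iff] using Fin.pos_iff_nonempty.mp hd
  set f : ℝ → ℝ := fun τ => ∑ i, (max (s i / 2 - τ) 0) ^ 2 with hf
  have hcont : Continuous f := by
    apply continuous_finset_sum
    intro i _
    exact ((continuous_const.sub continuous_id).max continuous_const).pow 2
  obtain ⟨i₀⟩ := Fin.pos_iff_nonempty.mp hd
  set a : ℝ := s i₀ / 2 - 1 with ha
  set b : ℝ := Finset.univ.sup' hne (fun i => s i / 2) with hb
  have hfa : 1 ≤ f a := by
    have h1 : ((fun i => (max (s i / 2 - a) 0) ^ 2) i₀ : ℝ) ≤ f a :=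
      Finset.single_le_sum (f := fun i => (max (s i / 2 - a) 0) ^ 2)
        (fun i _ => by positivity) (Finset.mem_univ i₀)
    simpa [ha] using h1
  have hfb : f b = 0 := by
    apply Finset.sum_eq_zero
    intro i _
    have : s i / 2 ≤ b := Finset.le_sup' (fun i => s i / 2) (Finset.mem_univ i)
    have : max (s i / 2 - b) 0 = 0 := max_eq_right (by linarith)
    simp [this]
  have h1 : (1 : ℝ) ∈ Set.uIcc (f a) (f b) := by
    rw [Set.mem_uIcc]
    right
    constructor <;> linarith
  obtain ⟨τ, _, hτ⟩ := intermediate_value_uIcc (hcont.continuousOn (s := Set.uIcc a b)) h1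
  exact ⟨τ, hτ⟩
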